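/- For any dual pair (C, C*) of n-ary generalized connectives and atoms A₁,…,Aₙ, the sequent ⊢ C(A₁,…,Aₙ), C*(~A₁,…,~Aₙ) is provable in MLL(C, C*) if and only if C = ⊗^n (i.e., P_C is the partition set {{(1),(2),…,(n)}} of all singletons) or C = ⅋^n (i.e., P_C is the partition set {{(1,…,n)}} whose single partition has one class). -/

import Mathlib

set_option linter.unusedSectionVars false
set_option linter.unusedTactic false
set_option linter.unreachableTactic false
set_option maxHeartbeats 1000000



/-! ## Partitions of `{1,…,n}`, meeting graphs, orthogonality (Danos–Regnier) -/

/-- A partition of `{1,…,n}`, represented as a `Finpartition` of `Fin n`. -/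
abbrev Partition' (n : ℕ) := Finpartition (Finset.univ : Finset (Fin n))

/-- The (simple graph underlying the) meeting graph `G(p,q)` of two partitions of `{1,…,n}`:
its vertices are the classes of `p` together with the classes of `q`, and a class of `p` is
adjacent to a class of `q` iff some `i ∈ {1,…,n}` belongs to both (in the meeting multigraph
there is one edge for each such `i`). -/
def meetingGraph {n : ℕ} (p q : Partition' n) :
    SimpleGraph ({c // c ∈ p.parts} ⊕ {d // d ∈ q.parts}) :=
  SimpleGraph.fromRel fun a b =>
    ∃ (c : {c // c ∈ p.parts}) (d : {d // d ∈ q.parts}),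
      ((c : Finset (Fin n)) ∩ (d : Finset (Fin n))).Nonempty ∧
      a = Sum.inl c ∧ b = Sum.inr d

/-- `p ⊥ q` : the meeting multigraph `G(p,q)` is connected and acyclic.  The meeting
multigraph has exactly `n` edges (one per element of `{1,…,n}`), and a connected multigraph
is acyclic iff its number of edges is exactly one less than its number of vertices; so
`G(p,q)` is connected and acyclic iff it is connected (equivalently, the underlying simple
graph is connected) and `n + 1 = (#classes of p) + (#classes of q)`. -/
def Finpartition.Orthogonal {n : ℕ} (p q : Partition' n) : Prop :=
  (meetingGraph p q).Connected ∧ n + 1 = p.parts.card + q.parts.card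

/-- Orthogonality of two partition sets: `P ⊥ Q` iff `p ⊥ q` for all `p ∈ P`, `q ∈ Q`. -/
def orthSet {n : ℕ} (P Q : Set (Partition' n)) : Prop :=
  ∀ p ∈ P, ∀ q ∈ Q, p.Orthogonal q

/-- `P^⊥`, the maximal partition set orthogonal to `P`. -/
def orthCompl {n : ℕ} (P : Set (Partition' n)) : Set (Partition' n) :=
  {q | ∀ p ∈ P, p.Orthogonal q}

/-- The partition set of `⊗ⁿ` : the single partition of `{1,…,n}` into singleton classes. -/
def IsTensorSet {n : ℕ} (R : Set (Partition' n)) : Prop :=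
  R = {p : Partition' n | ∀ c ∈ p.parts, c.card = 1}

/-- The partition set of `⅋ⁿ` : the single partition of `{1,…,n}` with one class. -/
def IsParSet {n : ℕ} (R : Set (Partition' n)) : Prop :=
  R = {p : Partition' n | p.parts = {Finset.univ}}

/-! ## Generalized multiplicative connectives and the sequent calculus `MLL(Cᵢ)` -/

/-- An `n`-ary generalized (multiplicative) connective `C` together with its dual `C*`:
a pair of nonempty finite partition sets of `{1,…,n}` with `(P_C)^⊥ = P_{C*}` and
`(P_{C*})^⊥ = P_C`.  `rules` is the partition set of the introduction (right) rules of
`C`, and `dualRules` the one of its dual `C*`. -/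
structure GenConn : Type where
  arity : ℕ
  rules : Set (Partition' arity)
  dualRules : Set (Partition' arity)
  rules_nonempty : rules.Nonempty
  rules_finite : rules.Finite
  dualRules_nonempty : dualRules.Nonempty
  dualRules_finite : dualRules.Finite
  orth : orthCompl rules = dualRules
  orth' : orthCompl dualRules = rules

/-- Formulas of `MLL(Cᵢ)`: built from atoms `P` and their duals `~P` by `⊗`, `⅋` and the
generalized connectives `Cᵢ` (with constructor `conn i`) and their duals `Cᵢ*` (with
constructor `dconn i`), where `i` ranges over a signature `I` and `Csig i` records the
arity and the partition sets of `Cᵢ`. -/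
inductive Formula (I : Type) (Csig : I → GenConn) : Type
  | pos : ℕ → Formula I Csig
  | neg : ℕ → Formula I Csig
  | tens : Formula I Csig → Formula I Csig → Formula I Csig
  | parr : Formula I Csig → Formula I Csig → Formula I Csig
  | conn : (i : I) → (Fin (Csig i).arity → Formula I Csig) → Formula I Csig
  | dconn : (i : I) → (Fin (Csig i).arity → Formula I Csig) → Formula I Csig

/-- The dual `~A` of a formula, extended by De Morgan and
`~(Cᵢ(A₁,…,Aₘ)) = Cᵢ*(~A₁,…,~Aₘ)`. -/
def Formula.dual {I : Type} {Csig : I → GenConn} : Formula I Csig → Formula I Csig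
  | .pos m => .neg m
  | .neg m => .pos m
  | .tens A B => .parr A.dual B.dual
  | .parr A B => .tens A.dual B.dual
  | .conn i A => .dconn i fun k => (A k).dual
  | .dconn i A => .conn i fun k => (A k).dual

/-- Provability in the one-sided sequent calculus `MLL(Cᵢ)` (sequents are multisets of
formulas).  The rules are the axiom `⊢ P, ~P` for atomic `P`, the cut rule (allowed only
when `cutEnabled = true`), the `⊗`- and `⅋`-rules of MLL, and, for each generalized
connective `Cᵢ` and each partition `p ∈ P_{Cᵢ}` with classes `c`, the introduction rule
with premises `⊢ Γ_c, A_{c₁},…,A_{cₘ}` (one for each class `c` of `p`) and conclusion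
`⊢ Γ₁,…,Γ_k, Cᵢ(A₁,…,Aₘ)`; dually for `Cᵢ*` using `p ∈ P_{Cᵢ*}`. -/
inductive Provable {I : Type} {Csig : I → GenConn} (cutEnabled : Bool) :
    Multiset (Formula I Csig) → Prop
  | ax (m : ℕ) : Provable cutEnabled {Formula.pos m, Formula.neg m}
  | cut (A : Formula I Csig) (Γ Δ : Multiset (Formula I Csig)) (hcut : cutEnabled = true) :
      Provable cutEnabled (A ::ₘ Γ) → Provable cutEnabled (A.dual ::ₘ Δ) →
      Provable cutEnabled (Γ + Δ)
  | tens (A B : Formula I Csig) (Γ Δ : Multiset (Formula I Csig)) :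
      Provable cutEnabled (A ::ₘ Γ) → Provable cutEnabled (B ::ₘ Δ) →
      Provable cutEnabled (Formula.tens A B ::ₘ (Γ + Δ))
  | parr (A B : Formula I Csig) (Γ : Multiset (Formula I Csig)) :
      Provable cutEnabled (A ::ₘ B ::ₘ Γ) →
      Provable cutEnabled (Formula.parr A B ::ₘ Γ)
  | conn (i : I) (A : Fin (Csig i).arity → Formula I Csig)
      (p : Partition' (Csig i).arity) (hp : p ∈ (Csig i).rules)
      (Γ : {c // c ∈ p.parts} → Multiset (Formula I Csig)) :
      (∀ c : {c // c ∈ p.parts},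
        Provable cutEnabled (Γ c + Multiset.map A (c : Finset (Fin (Csig i).arity)).val)) →
      Provable cutEnabled (Formula.conn i A ::ₘ ∑ c : {c // c ∈ p.parts}, Γ c)
  | dconn (i : I) (A : Fin (Csig i).arity → Formula I Csig)
      (p : Partition' (Csig i).arity) (hp : p ∈ (Csig i).dualRules)
      (Γ : {c // c ∈ p.parts} → Multiset (Formula I Csig)) :
      (∀ c : {c // c ∈ p.parts},
        Provable cutEnabled (Γ c + Multiset.map A (c : Finset (Fin (Csig i).arity)).val)) →
      Provable cutEnabled (Formula.dconn i A ::ₘ ∑ c : {c // c ∈ p.parts}, Γ c)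



open scoped Pointwise

/-! ### Auxiliary phase-space machinery -/

section Phase

variable {M : Type*} [AddCommMonoid M] (Bot : Set M)

/-- Polar of a set in a "phase space". -/
def pol (X : Set M) : Set M := {y | ∀ x ∈ X, x + y ∈ Bot}

variable {Bot}

lemma pol_anti {X Y : Set M} (h : X ⊆ Y) : pol Bot Y ⊆ pol Bot X :=
  fun _ hy x hx => hy x (h hx)

lemma subset_bipol {X : Set M} : X ⊆ pol Bot (pol Bot X) :=
  fun x hx y hy => by have := hy x hx; rwa [add_comm] at this

lemma pol_tripol {X : Set M} : pol Bot (pol Bot (pol Bot X)) = pol Bot X :=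
  Set.Subset.antisymm (pol_anti subset_bipol) subset_bipol

lemma mem_bipol {X : Set M} {x y : M} (hx : x ∈ pol Bot (pol Bot X))
    (hy : y ∈ pol Bot X) : x + y ∈ Bot := by
  have := hx y hy; rwa [add_comm] at this

/-- Sum of sets membership decomposition over a Finset. -/
lemma mem_finsetSum {ι : Type*} {s : Finset ι} {S : ι → Set M} {x : M}
    (hx : x ∈ ∑ i ∈ s, S i) :
    ∃ f : ι → M, (∀ i ∈ s, f i ∈ S i) ∧ x = ∑ i ∈ s, f i := by
  classical
  induction s using Finset.cons_induction generalizing x with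
  | empty =>
    refine ⟨fun _ => 0, by simp, ?_⟩
    simpa using hx
  | cons a s ha ih =>
    rw [Finset.sum_cons] at hx
    rcases Set.mem_add.1 hx with ⟨y, hy, z, hz, rfl⟩
    obtain ⟨f, hf, rfl⟩ := ih hz
    refine ⟨Function.update f a y, ?_, ?_⟩
    · intro i hi
      rcases Finset.mem_cons.1 hi with h | hmem
      · subst h; simpa using hy
      · rw [Function.update_of_ne (by rintro rfl; exact ha hmem)]
        exact hf i hmem
    · rw [Finset.sum_cons, Function.update_self]
      congr 1
      refine (Finset.sum_congr rfl fun i hi => ?_).symm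
      exact Function.update_of_ne (by rintro rfl; exact ha hi) _ _

lemma sum_mem_finsetSum {ι : Type*} {s : Finset ι} {S : ι → Set M} {f : ι → M}
    (hf : ∀ i ∈ s, f i ∈ S i) : ∑ i ∈ s, f i ∈ ∑ i ∈ s, S i := by
  classical
  induction s using Finset.cons_induction with
  | empty => simp
  | cons a s ha ih =>
    rw [Finset.sum_cons, Finset.sum_cons]
    exact Set.add_mem_add (hf a (Finset.mem_cons_self a s))
      (ih fun i hi => hf i (Finset.mem_cons.2 (Or.inr hi)))

end Phase

section Link

variable {M : Type*} [AddCommMonoid M] (Bot : Set M)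
variable {V : Type*} [DecidableEq V] {ι : Type*} [DecidableEq ι]

/-- One step along an edge of `K`. -/
def linkRel (e1 e2 : ι → V) (K : Finset ι) (a b : V) : Prop :=
  ∃ k ∈ K, (e1 k = a ∧ e2 k = b) ∨ (e1 k = b ∧ e2 k = a)

/-- The polar set a vertex's element must lie in. -/
def vertexSet (e1 e2 : ι → V) (S1 S2 : ι → Set M) (K : Finset ι) (v : V) : Set M :=
  pol Bot ((∑ k ∈ K.filter (fun k => e1 k = v), S1 k) +
            ∑ k ∈ K.filter (fun k => e2 k = v), S2 k)

/-- All of the hypotheses of the linking lemma. -/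
def LinkHyp (e1 e2 : ι → V) (S1 S2 : ι → Set M) (K : Finset ι) (W : Finset V)
    (x : V → M) : Prop :=
  W.card = K.card + 1 ∧
  (∀ k ∈ K, e1 k ∈ W ∧ e2 k ∈ W ∧ e1 k ≠ e2 k) ∧
  (∀ v ∈ W, ∀ w ∈ W, Relation.ReflTransGen (linkRel e1 e2 K) v w) ∧
  (∀ k ∈ K, ∀ a ∈ pol Bot (S1 k), ∀ b ∈ pol Bot (S2 k), a + b ∈ Bot) ∧
  (∀ v ∈ W, x v ∈ vertexSet Bot e1 e2 S1 S2 K v)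

variable {Bot}

lemma linkRel_swap (e1 e2 : ι → V) (K : Finset ι) (a b : V) :
    linkRel e2 e1 K a b ↔ linkRel e1 e2 K a b := by
  constructor <;> rintro ⟨k, hk, h | h⟩
  · exact ⟨k, hk, Or.inr ⟨h.2, h.1⟩⟩
  · exact ⟨k, hk, Or.inl ⟨h.2, h.1⟩⟩
  · exact ⟨k, hk, Or.inr ⟨h.2, h.1⟩⟩
  · exact ⟨k, hk, Or.inl ⟨h.2, h.1⟩⟩

lemma LinkHyp.swap {e1 e2 : ι → V} {S1 S2 : ι → Set M} {K : Finset ι} {W : Finset V}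
    {x : V → M} (h : LinkHyp Bot e1 e2 S1 S2 K W x) :
    LinkHyp Bot e2 e1 S2 S1 K W x := by
  obtain ⟨h1, h2, h3, h4, h5⟩ := h
  refine ⟨h1, fun k hk => ⟨(h2 k hk).2.1, (h2 k hk).1, (h2 k hk).2.2.symm⟩, ?_, ?_, ?_⟩
  · intro v hv w hw
    exact Relation.ReflTransGen.mono (fun a b hab => (linkRel_swap e1 e2 K a b).2 hab) _ _ (h3 v hv w hw)
  · intro k hk a ha b hb
    rw [add_comm]; exact h4 k hk b hb a ha
  · intro v hv
    have := h5 v hv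
    unfold vertexSet at this ⊢
    rwa [add_comm] at this

lemma reach_erase {e1 e2 : ι → V} {K : Finset ι} {k0 : ι} {v0 w0 : V}
    (huniq : ∀ k ∈ K, (e1 k = v0 ∨ e2 k = v0) → k = k0)
    (hk0 : (e1 k0 = v0 ∧ e2 k0 = w0) ∨ (e1 k0 = w0 ∧ e2 k0 = v0))
    (hvw : v0 ≠ w0) :
    ∀ {a b}, Relation.ReflTransGen (linkRel e1 e2 K) a b → a ≠ v0 →
      Relation.ReflTransGen (linkRel e1 e2 (K.erase k0)) a (if b = v0 then w0 else b) := by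
  intro a b h ha
  induction h with
  | refl => rw [if_neg ha]
  | @tail b c hab hbc ih =>
    obtain ⟨k, hk, hor⟩ := hbc
    by_cases hc : c = v0
    · rw [if_pos hc]
      subst hc
      have hkk0 : k = k0 := huniq k hk (by
        rcases hor with ⟨h1, h2⟩ | ⟨h1, h2⟩
        · exact Or.inr h2
        · exact Or.inl h1)
      subst hkk0
      have hbw : b = w0 := by
        rcases hor with ⟨h1, h2⟩ | ⟨h1, h2⟩ <;> rcases hk0 with ⟨g1, g2⟩ | ⟨g1, g2⟩
        · exact absurd (g2.symm.trans h2) hvw.symm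
        · exact h1.symm.trans g1
        · exact h2.symm.trans g2
        · exact absurd (g1.symm.trans h1) hvw.symm
      rw [hbw, if_neg hvw.symm] at ih
      exact ih
    · rw [if_neg hc]
      by_cases hb : b = v0
      · have hkk0 : k = k0 := huniq k hk (by
          rcases hor with ⟨h1, h2⟩ | ⟨h1, h2⟩
          · exact Or.inl (hb ▸ h1)
          · exact Or.inr (hb ▸ h2))
        subst hkk0
        have hcw : c = w0 := by
          subst hb
          rcases hor with ⟨h1, h2⟩ | ⟨h1, h2⟩ <;> rcases hk0 with ⟨g1, g2⟩ | ⟨g1, g2⟩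
          · exact h2.symm.trans g2
          · exact absurd (g1.symm.trans h1) hvw.symm
          · exact absurd (g2.symm.trans h2) hvw.symm
          · exact h1.symm.trans g1
        rw [if_pos hb] at ih
        rw [hcw]
        exact ih
      · rw [if_neg hb] at ih
        have hih := ih
        have hkne : k ≠ k0 := by
          rintro rfl
          rcases hor with ⟨h1, h2⟩ | ⟨h1, h2⟩ <;> rcases hk0 with ⟨g1, g2⟩ | ⟨g1, g2⟩
          · exact hb (h1.symm.trans g1)
          · exact hc (h2.symm.trans g2)
          · exact hc (h1.symm.trans g1)
          · exact hb (h2.symm.trans g2)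
        exact hih.tail ⟨k, Finset.mem_erase.2 ⟨hkne, hk⟩, hor⟩

/-- Peeling a leaf on the `e1` side. -/
lemma link_peel {N : ℕ}
    (IH : ∀ (e1 e2 : ι → V) (S1 S2 : ι → Set M) (K : Finset ι) (W : Finset V) (x : V → M),
      K.card = N → LinkHyp Bot e1 e2 S1 S2 K W x → ∑ v ∈ W, x v ∈ Bot)
    (e1 e2 : ι → V) (S1 S2 : ι → Set M) (K : Finset ι) (W : Finset V) (x : V → M)
    (hK : K.card = N + 1) (hyp : LinkHyp Bot e1 e2 S1 S2 K W x)
    (v0 : V) (hv0 : v0 ∈ W) (k0 : ι)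
    (hflt1 : K.filter (fun k => e1 k = v0) = {k0})
    (hflt2 : K.filter (fun k => e2 k = v0) = ∅) :
    ∑ v ∈ W, x v ∈ Bot := by
  classical
  obtain ⟨hW, hends, hconn, hedge, hx⟩ := hyp
  have hk0K' : k0 ∈ K ∧ e1 k0 = v0 := by
    have : k0 ∈ K.filter (fun k => e1 k = v0) := by
      rw [hflt1]; exact Finset.mem_singleton_self k0
    simpa using this
  obtain ⟨hk0K, he1k0⟩ := hk0K'
  set w0 := e2 k0 with hw0def
  have hvw : v0 ≠ w0 := by
    have := (hends k0 hk0K).2.2; rwa [he1k0] at this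
  have hw0W : w0 ∈ W := (hends k0 hk0K).2.1
  have huniq : ∀ k ∈ K, (e1 k = v0 ∨ e2 k = v0) → k = k0 := by
    intro k hk hor
    rcases hor with h | h
    · have hm : k ∈ K.filter (fun k => e1 k = v0) := Finset.mem_filter.2 ⟨hk, h⟩
      rw [hflt1] at hm; exact Finset.mem_singleton.1 hm
    · have hm : k ∈ K.filter (fun k => e2 k = v0) := Finset.mem_filter.2 ⟨hk, h⟩
      rw [hflt2] at hm; exact absurd hm (Finset.notMem_empty k)
  set K' := K.erase k0 with hK'def
  set W' := W.erase v0 with hW'def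
  set x' := Function.update x w0 (x v0 + x w0) with hx'def
  have hw0W' : w0 ∈ W' := Finset.mem_erase.2 ⟨fun h => hvw h.symm, hw0W⟩
  have hKcard' : K'.card = N := by
    rw [hK'def, Finset.card_erase_of_mem hk0K, hK]
    omega
  have hWcard' : W'.card = K'.card + 1 := by
    rw [hW'def, Finset.card_erase_of_mem hv0, hW, hK]
    omega
  have hK'v0 : ∀ k ∈ K', e1 k ≠ v0 ∧ e2 k ≠ v0 := by
    intro k hk
    obtain ⟨hkne, hkK⟩ := Finset.mem_erase.1 hk
    exact ⟨fun h => hkne (huniq k hkK (Or.inl h)),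
           fun h => hkne (huniq k hkK (Or.inr h))⟩
  have hends' : ∀ k ∈ K', e1 k ∈ W' ∧ e2 k ∈ W' ∧ e1 k ≠ e2 k := by
    intro k hk
    obtain ⟨hkne, hkK⟩ := Finset.mem_erase.1 hk
    exact ⟨Finset.mem_erase.2 ⟨(hK'v0 k hk).1, (hends k hkK).1⟩,
      Finset.mem_erase.2 ⟨(hK'v0 k hk).2, (hends k hkK).2.1⟩, (hends k hkK).2.2⟩
  have hconn' : ∀ v ∈ W', ∀ w ∈ W', Relation.ReflTransGen (linkRel e1 e2 K') v w := by
    intro v hv w hw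
    obtain ⟨hvne, hvW⟩ := Finset.mem_erase.1 hv
    obtain ⟨hwne, hwW⟩ := Finset.mem_erase.1 hw
    have := reach_erase huniq (Or.inl ⟨he1k0, rfl⟩) hvw (hconn v hvW w hwW) hvne
    rwa [if_neg hwne] at this
  have hedge' : ∀ k ∈ K', ∀ a ∈ pol Bot (S1 k), ∀ b ∈ pol Bot (S2 k), a + b ∈ Bot :=
    fun k hk => hedge k (Finset.mem_erase.1 hk).2
  have hfiltK' : ∀ (f : ι → V) (u : V), f k0 ≠ u →
      K'.filter (fun k => f k = u) = K.filter (fun k => f k = u) := by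
    intro f u hne
    rw [hK'def, Finset.filter_erase, Finset.erase_eq_of_notMem]
    intro hmem
    exact hne (Finset.mem_filter.1 hmem).2
  have hxv0 : x v0 ∈ pol Bot (S1 k0) := by
    have h := hx v0 hv0
    unfold vertexSet at h
    rw [hflt1, hflt2, Finset.sum_singleton, Finset.sum_empty, add_zero] at h
    exact h
  have hxmem' : ∀ v ∈ W', x' v ∈ vertexSet Bot e1 e2 S1 S2 K' v := by
    intro u hu
    obtain ⟨hune, huW⟩ := Finset.mem_erase.1 hu
    by_cases huw : u = w0
    · subst huw
      rw [hx'def, Function.update_self]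
      unfold vertexSet
      have hfe1 : K'.filter (fun k => e1 k = w0) = K.filter (fun k => e1 k = w0) :=
        hfiltK' e1 w0 (by rw [he1k0]; exact hune ∘ Eq.symm)
      have hk0F2 : k0 ∈ K.filter (fun k => e2 k = w0) := Finset.mem_filter.2 ⟨hk0K, rfl⟩
      have hfe2 : K'.filter (fun k => e2 k = w0) = (K.filter (fun k => e2 k = w0)).erase k0 := by
        rw [hK'def, Finset.filter_erase]
      have hQ : S2 k0 + ∑ k ∈ (K.filter (fun k => e2 k = w0)).erase k0, S2 k =
          ∑ k ∈ K.filter (fun k => e2 k = w0), S2 k := Finset.add_sum_erase _ S2 hk0F2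
      rw [hfe1, hfe2]
      intro z hz
      rcases Set.mem_add.1 hz with ⟨up, hup, uq, huq, rfl⟩
      have hB : x w0 + (up + uq) ∈ pol Bot (S2 k0) := by
        intro b hb
        have hbq : b + uq ∈ ∑ k ∈ K.filter (fun k => e2 k = w0), S2 k := by
          rw [← hQ]; exact Set.add_mem_add hb huq
        have hz2 : (up + (b + uq)) + x w0 ∈ Bot := by
          have := hx w0 huW
          unfold vertexSet at this
          exact this _ (Set.add_mem_add hup hbq)
        have heq : (up + (b + uq)) + x w0 = b + (x w0 + (up + uq)) := by abel
        rwa [heq] at hz2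
      have := hedge k0 hk0K (x v0) hxv0 (x w0 + (up + uq)) hB
      have heq : x v0 + (x w0 + (up + uq)) = up + uq + (x v0 + x w0) := by abel
      rwa [heq] at this
    · rw [hx'def, Function.update_of_ne huw]
      unfold vertexSet
      rw [hfiltK' e1 u (by rw [he1k0]; exact hune ∘ Eq.symm),
          hfiltK' e2 u (fun h => huw h.symm)]
      have h := hx u huW
      unfold vertexSet at h
      exact h
  have hres := IH e1 e2 S1 S2 K' W' x' hKcard'
    ⟨hWcard', hends', hconn', hedge', hxmem'⟩
  have hsum : ∑ v ∈ W', x' v = ∑ v ∈ W, x v := by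
    have h1 : x v0 + ∑ v ∈ W', x v = ∑ v ∈ W, x v := Finset.add_sum_erase W x hv0
    have h2 : x w0 + ∑ v ∈ W'.erase w0, x v = ∑ v ∈ W', x v := Finset.add_sum_erase W' x hw0W'
    have h3 : x' w0 + ∑ v ∈ W'.erase w0, x' v = ∑ v ∈ W', x' v :=
      Finset.add_sum_erase W' x' hw0W'
    have h4 : ∑ v ∈ W'.erase w0, x' v = ∑ v ∈ W'.erase w0, x v :=
      Finset.sum_congr rfl fun u hu =>
        Function.update_of_ne (Finset.mem_erase.1 hu).1 _ _
    have h5 : x' w0 = x v0 + x w0 := Function.update_self _ _ _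
    rw [← h3, h4, h5, ← h1, ← h2]
    abel
  rwa [hsum] at hres

theorem link_main : ∀ (N : ℕ) (e1 e2 : ι → V) (S1 S2 : ι → Set M) (K : Finset ι)
    (W : Finset V) (x : V → M), K.card = N → LinkHyp Bot e1 e2 S1 S2 K W x →
    ∑ v ∈ W, x v ∈ Bot := by
  intro N
  induction N with
  | zero =>
    intro e1 e2 S1 S2 K W x hK hyp
    obtain ⟨hW, -, -, -, hx⟩ := hyp
    obtain rfl : K = ∅ := Finset.card_eq_zero.1 hK
    obtain ⟨v, rfl⟩ := Finset.card_eq_one.1 (by simpa using hW)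
    rw [Finset.sum_singleton]
    have h := hx v (Finset.mem_singleton_self v)
    unfold vertexSet at h
    simp only [Finset.filter_empty, Finset.sum_empty, add_zero] at h
    simpa using h 0 (by simp)
  | succ N IH =>
    intro e1 e2 S1 S2 K W x hK hyp
    have hW := hyp.1
    have hends := hyp.2.1
    have hconn := hyp.2.2.1
    have hW2 : 1 < W.card := by rw [hW, hK]; omega
    have hdegsum : (∑ v ∈ W, ((K.filter fun k => e1 k = v).card +
        (K.filter fun k => e2 k = v).card)) = 2 * K.card := by
      rw [Finset.sum_add_distrib,
        ← Finset.card_eq_sum_card_fiberwise (fun k hk => (hends k hk).1),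
        ← Finset.card_eq_sum_card_fiberwise (fun k hk => (hends k hk).2.1)]
      ring
    have hdegpos : ∀ v ∈ W, 1 ≤ (K.filter fun k => e1 k = v).card +
        (K.filter fun k => e2 k = v).card := by
      intro v hv
      obtain ⟨w, hwW, hwv⟩ := Finset.exists_mem_ne hW2 v
      rcases (hconn v hv w hwW).cases_head with heq | ⟨c, ⟨k, hk, hor⟩, -⟩
      · exact absurd heq.symm hwv
      · rcases hor with ⟨h1, -⟩ | ⟨-, h2⟩
        · have : k ∈ K.filter fun k => e1 k = v := Finset.mem_filter.2 ⟨hk, h1⟩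
          have := Finset.card_pos.2 ⟨k, this⟩
          omega
        · have : k ∈ K.filter fun k => e2 k = v := Finset.mem_filter.2 ⟨hk, h2⟩
          have := Finset.card_pos.2 ⟨k, this⟩
          omega
    have hleaf : ∃ v0 ∈ W, (K.filter fun k => e1 k = v0).card +
        (K.filter fun k => e2 k = v0).card = 1 := by
      by_contra hno
      push_neg at hno
      have h2le : ∀ v ∈ W, 2 ≤ (K.filter fun k => e1 k = v).card +
          (K.filter fun k => e2 k = v).card := by
        intro v hv
        have := hdegpos v hv
        have := hno v hv
        omega
      have hsum2 : 2 * W.card ≤ ∑ v ∈ W, ((K.filter fun k => e1 k = v).card +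
          (K.filter fun k => e2 k = v).card) := by
        calc 2 * W.card = ∑ _v ∈ W, 2 := by rw [Finset.sum_const, smul_eq_mul, mul_comm]
        _ ≤ _ := Finset.sum_le_sum h2le
      rw [hdegsum, hW] at hsum2
      omega
    obtain ⟨v0, hv0, hdeg⟩ := hleaf
    by_cases hc1 : (K.filter fun k => e1 k = v0).card = 1
    · obtain ⟨k0, hk0⟩ := Finset.card_eq_one.1 hc1
      have hc2 : K.filter (fun k => e2 k = v0) = ∅ := Finset.card_eq_zero.1 (by omega)
      exact link_peel IH e1 e2 S1 S2 K W x hK hyp v0 hv0 k0 hk0 hc2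
    · have hc2card : (K.filter fun k => e2 k = v0).card = 1 := by omega
      obtain ⟨k0, hk0⟩ := Finset.card_eq_one.1 hc2card
      have hc1e : K.filter (fun k => e1 k = v0) = ∅ := Finset.card_eq_zero.1 (by omega)
      exact link_peel IH e2 e1 S2 S1 K W x hK hyp.swap v0 hv0 k0 hk0 hc1e

end Link



section Key

variable {M : Type*} [AddCommMonoid M] {Bot : Set M}

theorem key_orth {n : ℕ} {p q : Partition' n} (hort : p.Orthogonal q)
    (S1 S2 : Fin n → Set M)
    (hedge : ∀ k, ∀ a ∈ pol Bot (S1 k), ∀ b ∈ pol Bot (S2 k), a + b ∈ Bot)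
    {z w : M}
    (hz : z ∈ ∑ c ∈ p.parts, pol Bot (∑ k ∈ c, S1 k))
    (hw : w ∈ ∑ d ∈ q.parts, pol Bot (∑ k ∈ d, S2 k)) :
    z + w ∈ Bot := by
  classical
  obtain ⟨f, hf, rfl⟩ := mem_finsetSum hz
  obtain ⟨g, hg, rfl⟩ := mem_finsetSum hw
  set V := ({c // c ∈ p.parts} ⊕ {d // d ∈ q.parts}) with hV
  set e1 : Fin n → V := fun k => Sum.inl ⟨p.part k, p.part_mem.2 (Finset.mem_univ k)⟩ with he1
  set e2 : Fin n → V := fun k => Sum.inr ⟨q.part k, q.part_mem.2 (Finset.mem_univ k)⟩ with he2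
  set x : V → M := Sum.elim (fun c => f c.1) (fun d => g d.1) with hxdef
  have hmain := link_main (Bot := Bot) n e1 e2 S1 S2 Finset.univ Finset.univ x
  have hcard : (Finset.univ : Finset V).card = (Finset.univ : Finset (Fin n)).card + 1 := by
    rw [Finset.card_univ, Finset.card_univ, Fintype.card_sum, Fintype.card_coe,
      Fintype.card_coe, Fintype.card_fin]
    have := hort.2
    omega
  have hends : ∀ k ∈ (Finset.univ : Finset (Fin n)),
      e1 k ∈ (Finset.univ : Finset V) ∧ e2 k ∈ (Finset.univ : Finset V) ∧ e1 k ≠ e2 k := by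
    intro k _
    refine ⟨Finset.mem_univ _, Finset.mem_univ _, ?_⟩
    simp [he1, he2]
  have hconn : ∀ v ∈ (Finset.univ : Finset V), ∀ w ∈ (Finset.univ : Finset V),
      Relation.ReflTransGen (linkRel e1 e2 Finset.univ) v w := by
    intro v _ w _
    have hreach := hort.1.preconnected v w
    rw [SimpleGraph.reachable_iff_reflTransGen] at hreach
    refine Relation.ReflTransGen.mono ?_ _ _ hreach
    intro a b hab
    rw [meetingGraph, SimpleGraph.fromRel_adj] at hab
    obtain ⟨hne, h | h⟩ := hab
    · obtain ⟨c, d, hcd, rfl, rfl⟩ := h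
      obtain ⟨k, hk⟩ := hcd
      rw [Finset.mem_inter] at hk
      refine ⟨k, Finset.mem_univ k, Or.inl ⟨?_, ?_⟩⟩
      · rw [he1]
        exact congrArg Sum.inl (Subtype.ext (p.part_eq_of_mem c.2 hk.1))
      · rw [he2]
        exact congrArg Sum.inr (Subtype.ext (q.part_eq_of_mem d.2 hk.2))
    · obtain ⟨c, d, hcd, rfl, rfl⟩ := h
      obtain ⟨k, hk⟩ := hcd
      rw [Finset.mem_inter] at hk
      refine ⟨k, Finset.mem_univ k, Or.inr ⟨?_, ?_⟩⟩
      · rw [he1]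
        exact congrArg Sum.inl (Subtype.ext (p.part_eq_of_mem c.2 hk.1))
      · rw [he2]
        exact congrArg Sum.inr (Subtype.ext (q.part_eq_of_mem d.2 hk.2))
  have hxmem : ∀ v ∈ (Finset.univ : Finset V), x v ∈ vertexSet Bot e1 e2 S1 S2 Finset.univ v := by
    rintro (c | d) -
    · unfold vertexSet
      have hflt1 : Finset.univ.filter (fun k => e1 k = Sum.inl c) = c.1 := by
        ext k
        simp only [Finset.mem_filter, Finset.mem_univ, true_and, he1, Sum.inl.injEq]
        constructor
        · intro h
          have h2 := congrArg Subtype.val (Sum.inl_injective h)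
          simp only at h2
          rw [← h2]
          exact p.mem_part (Finset.mem_univ k)
        · intro h
          exact congrArg Sum.inl (Subtype.ext (p.part_eq_of_mem c.2 h))
      have hflt2 : Finset.univ.filter (fun k => e2 k = Sum.inl c) = ∅ := by
        apply Finset.filter_false_of_mem
        intro k _
        simp [he2]
      rw [hflt1, hflt2, Finset.sum_empty, add_zero]
      exact hf c.1 c.2
    · unfold vertexSet
      have hflt1 : Finset.univ.filter (fun k => e1 k = Sum.inr d) = ∅ := by
        apply Finset.filter_false_of_mem
        intro k _
        simp [he1]
      have hflt2 : Finset.univ.filter (fun k => e2 k = Sum.inr d) = d.1 := by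
        ext k
        simp only [Finset.mem_filter, Finset.mem_univ, true_and, he2, Sum.inr.injEq]
        constructor
        · intro h
          have h2 := congrArg Subtype.val (Sum.inr_injective h)
          simp only at h2
          rw [← h2]
          exact q.mem_part (Finset.mem_univ k)
        · intro h
          exact congrArg Sum.inr (Subtype.ext (q.part_eq_of_mem d.2 h))
      rw [hflt1, hflt2, Finset.sum_empty, zero_add]
      exact hg d.1 d.2
  have hres := hmain (by rw [Finset.card_univ, Fintype.card_fin])
    ⟨hcard, hends, hconn, fun k _ => hedge k, hxmem⟩
  have hsplit : ∑ v ∈ (Finset.univ : Finset V), x v =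
      (∑ i ∈ p.parts, f i) + ∑ i ∈ q.parts, g i := by
    rw [Fintype.sum_sum_type]
    congr 1
    · exact Finset.sum_coe_sort p.parts f
    · exact Finset.sum_coe_sort q.parts g
  rwa [hsplit] at hres

end Key


/-! ## Phase semantics over cut-free provability (Okada-style) -/

namespace MLLSem

variable {I : Type} {Csig : I → GenConn}

/-- cut-free provability as the pole. -/
def Bt (I : Type) (Csig : I → GenConn) : Set (Multiset (Formula I Csig)) :=
  {Γ | Provable false Γ}

noncomputable def Interp : Formula I Csig → Set (Multiset (Formula I Csig))
  | .pos m => {Γ | Provable false (Formula.pos m ::ₘ Γ)}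
  | .neg m => pol (Bt I Csig) {Γ | Provable false (Formula.pos m ::ₘ Γ)}
  | .tens A B => pol (Bt I Csig) (pol (Bt I Csig) (Interp A + Interp B))
  | .parr A B => pol (Bt I Csig) (pol (Bt I Csig) (Interp A) + pol (Bt I Csig) (Interp B))
  | .conn i A => pol (Bt I Csig) (pol (Bt I Csig)
      (⋃ p ∈ (Csig i).rules, ∑ c ∈ p.parts,
        pol (Bt I Csig) (∑ k ∈ c, pol (Bt I Csig) (Interp (A k)))))
  | .dconn i A => pol (Bt I Csig) (pol (Bt I Csig)
      (⋃ q ∈ (Csig i).dualRules, ∑ d ∈ q.parts,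
        pol (Bt I Csig) (∑ k ∈ d, pol (Bt I Csig) (Interp (A k)))))

lemma sum_singleton_map {α β : Type*} (c : Finset α) (f : α → β) :
    ∑ k ∈ c, ({f k} : Multiset β) = c.val.map f := by
  rw [Finset.sum_eq_multiset_sum]
  induction c.val using Multiset.induction with
  | empty => simp
  | cons a s ih => simp [ih]

lemma interp_sub (A : Formula I Csig) :
    Interp A ⊆ {Γ | Provable false (A ::ₘ Γ)} := by
  induction A with
  | pos m => exact fun Γ h => h
  | neg m =>
    intro Δ hΔ
    have hax : ({Formula.neg m} : Multiset (Formula I Csig)) ∈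
        ({Γ | Provable false (Formula.pos m ::ₘ Γ)} : Set (Multiset (Formula I Csig))) :=
      Provable.ax m
    have := hΔ _ hax
    rwa [Multiset.singleton_add] at this
  | tens A B ihA ihB =>
    intro Δ hΔ
    have hkey : ({Formula.tens A B} : Multiset (Formula I Csig)) ∈
        pol (Bt I Csig) (Interp A + Interp B) := by
      intro s hs
      rcases Set.mem_add.1 hs with ⟨γa, hγa, γb, hγb, rfl⟩
      have pa := ihA hγa
      have pb := ihB hγb
      have := Provable.tens A B γa γb pa pb
      show (γa + γb) + {Formula.tens A B} ∈ Bt I Csig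
      rwa [add_comm, Multiset.singleton_add]
    have := hΔ _ hkey
    rwa [Multiset.singleton_add] at this
  | parr A B ihA ihB =>
    intro Δ hΔ
    have hA : ({A} : Multiset (Formula I Csig)) ∈ pol (Bt I Csig) (Interp A) := by
      intro Γ hΓ
      have := ihA hΓ
      show Γ + {A} ∈ Bt I Csig
      rwa [add_comm, Multiset.singleton_add]
    have hB : ({B} : Multiset (Formula I Csig)) ∈ pol (Bt I Csig) (Interp B) := by
      intro Γ hΓ
      have := ihB hΓ
      show Γ + {B} ∈ Bt I Csig
      rwa [add_comm, Multiset.singleton_add]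
    have hmem := hΔ _ (Set.add_mem_add hA hB)
    have heq : ({A} + {B}) + Δ = A ::ₘ B ::ₘ Δ := by
      rw [Multiset.singleton_add, Multiset.cons_add, Multiset.singleton_add]
    rw [heq] at hmem
    exact Provable.parr A B Δ hmem
  | conn i A ih =>
    intro Δ hΔ
    have hkey : ({Formula.conn i A} : Multiset (Formula I Csig)) ∈
        pol (Bt I Csig) (⋃ p ∈ (Csig i).rules, ∑ c ∈ p.parts,
          pol (Bt I Csig) (∑ k ∈ c, pol (Bt I Csig) (Interp (A k)))) := by
      intro s hs
      rw [Set.mem_iUnion₂] at hs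
      obtain ⟨p, hp, hs⟩ := hs
      obtain ⟨γ, hγ, rfl⟩ := mem_finsetSum hs
      have hprem : ∀ c : {c // c ∈ p.parts},
          Provable false (γ c.1 + Multiset.map A (c : Finset (Fin (Csig i).arity)).val) := by
        intro c
        have hatom : (Multiset.map A (c : Finset (Fin (Csig i).arity)).val) ∈
            ∑ k ∈ c.1, pol (Bt I Csig) (Interp (A k)) := by
          rw [← sum_singleton_map c.1 A]
          exact sum_mem_finsetSum fun k _ => by
            intro Γ hΓ
            have := ih k hΓ
            show Γ + {A k} ∈ Bt I Csig
            rwa [add_comm, Multiset.singleton_add]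
        have := hγ c.1 c.2 (Multiset.map A c.1.val) hatom
        rwa [add_comm] at this
      have := Provable.conn i A p hp (fun c => γ c.1) hprem
      have heq : ∑ c : {c // c ∈ p.parts}, γ c.1 = ∑ c ∈ p.parts, γ c :=
        Finset.sum_coe_sort p.parts γ
      rw [heq] at this
      show (∑ c ∈ p.parts, γ c) + {Formula.conn i A} ∈ Bt I Csig
      rwa [add_comm, Multiset.singleton_add]
    have := hΔ _ hkey
    rwa [Multiset.singleton_add] at this
  | dconn i A ih =>
    intro Δ hΔ
    have hkey : ({Formula.dconn i A} : Multiset (Formula I Csig)) ∈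
        pol (Bt I Csig) (⋃ q ∈ (Csig i).dualRules, ∑ d ∈ q.parts,
          pol (Bt I Csig) (∑ k ∈ d, pol (Bt I Csig) (Interp (A k)))) := by
      intro s hs
      rw [Set.mem_iUnion₂] at hs
      obtain ⟨q, hq, hs⟩ := hs
      obtain ⟨γ, hγ, rfl⟩ := mem_finsetSum hs
      have hprem : ∀ d : {d // d ∈ q.parts},
          Provable false (γ d.1 + Multiset.map A (d : Finset (Fin (Csig i).arity)).val) := by
        intro d
        have hatom : (Multiset.map A (d : Finset (Fin (Csig i).arity)).val) ∈
            ∑ k ∈ d.1, pol (Bt I Csig) (Interp (A k)) := by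
          rw [← sum_singleton_map d.1 A]
          exact sum_mem_finsetSum fun k _ => by
            intro Γ hΓ
            have := ih k hΓ
            show Γ + {A k} ∈ Bt I Csig
            rwa [add_comm, Multiset.singleton_add]
        have := hγ d.1 d.2 (Multiset.map A d.1.val) hatom
        rwa [add_comm] at this
      have := Provable.dconn i A q hq (fun d => γ d.1) hprem
      have heq : ∑ d : {d // d ∈ q.parts}, γ d.1 = ∑ d ∈ q.parts, γ d :=
        Finset.sum_coe_sort q.parts γ
      rw [heq] at this
      show (∑ d ∈ q.parts, γ d) + {Formula.dconn i A} ∈ Bt I Csig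
      rwa [add_comm, Multiset.singleton_add]
    have := hΔ _ hkey
    rwa [Multiset.singleton_add] at this

lemma single_mem_pol (A : Formula I Csig) :
    ({A} : Multiset (Formula I Csig)) ∈ pol (Bt I Csig) (Interp A) := by
  intro Γ hΓ
  have := interp_sub A hΓ
  show Γ + {A} ∈ Bt I Csig
  rwa [add_comm, Multiset.singleton_add]

end MLLSem

namespace MLLSem

variable {I : Type} {Csig : I → GenConn}

lemma add_mem_bipol {M : Type*} [AddCommMonoid M] {Bot : Set M} {X Y : Set M} {x y : M}
    (hx : x ∈ pol Bot (pol Bot X)) (hy : y ∈ pol Bot (pol Bot Y)) :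
    x + y ∈ pol Bot (pol Bot (X + Y)) := by
  intro c hc
  have h1 : ∀ a ∈ X, a + c ∈ pol Bot Y := by
    intro a ha b hb
    have := hc (a + b) (Set.add_mem_add ha hb)
    have heq : (a + b) + c = b + (a + c) := by abel
    rwa [heq] at this
  have h2 : c + y ∈ pol Bot X := by
    intro a ha
    have := hy (a + c) (h1 a ha)
    have heq : (a + c) + y = a + (c + y) := by abel
    rwa [heq] at this
  have := hx (c + y) h2
  have heq : (c + y) + x = c + (x + y) := by abel
  rwa [heq] at this

lemma dual_sub (A : Formula I Csig) :
    Interp (Formula.dual A) ⊆ pol (Bt I Csig) (Interp A) := by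
  induction A with
  | pos m => exact fun Γ h => h
  | neg m => exact subset_bipol
  | tens A B ihA ihB =>
    show Interp (Formula.parr A.dual B.dual) ⊆ _
    have htgt : pol (Bt I Csig) (Interp (Formula.tens A B)) =
        pol (Bt I Csig) (Interp A + Interp B) := pol_tripol
    rw [htgt]
    show pol (Bt I Csig) (pol (Bt I Csig) (Interp A.dual) + pol (Bt I Csig) (Interp B.dual)) ⊆ _
    apply pol_anti
    apply Set.add_subset_add
    · exact subset_bipol.trans (pol_anti ihA)
    · exact subset_bipol.trans (pol_anti ihB)
  | parr A B ihA ihB =>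
    show Interp (Formula.tens A.dual B.dual) ⊆ _
    show pol (Bt I Csig) (pol (Bt I Csig) (Interp A.dual + Interp B.dual)) ⊆
      pol (Bt I Csig) (pol (Bt I Csig) (pol (Bt I Csig) (Interp A) + pol (Bt I Csig) (Interp B)))
    exact pol_anti (pol_anti (Set.add_subset_add ihA ihB))
  | conn i A ih =>
    show Interp (Formula.dconn i (fun k => (A k).dual)) ⊆ _
    have htgt : pol (Bt I Csig) (Interp (Formula.conn i A)) =
        pol (Bt I Csig) (⋃ p ∈ (Csig i).rules, ∑ c ∈ p.parts,
          pol (Bt I Csig) (∑ k ∈ c, pol (Bt I Csig) (Interp (A k)))) := pol_tripol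
    rw [htgt]
    have hDS : (⋃ q ∈ (Csig i).dualRules, ∑ d ∈ q.parts,
        pol (Bt I Csig) (∑ k ∈ d, pol (Bt I Csig) (Interp ((A k).dual)))) ⊆
        pol (Bt I Csig) (⋃ p ∈ (Csig i).rules, ∑ c ∈ p.parts,
          pol (Bt I Csig) (∑ k ∈ c, pol (Bt I Csig) (Interp (A k)))) := by
      intro w hw
      rw [Set.mem_iUnion₂] at hw
      obtain ⟨q, hq, hw⟩ := hw
      intro z hz
      rw [Set.mem_iUnion₂] at hz
      obtain ⟨p, hp, hz⟩ := hz
      have hort : p.Orthogonal q := by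
        have := (Csig i).orth
        rw [← this] at hq
        exact hq p hp
      refine key_orth hort (fun k => pol (Bt I Csig) (Interp (A k)))
        (fun k => pol (Bt I Csig) (Interp ((A k).dual))) ?_ hz hw
      intro k a ha b hb
      have hsub : pol (Bt I Csig) (pol (Bt I Csig) (Interp ((A k).dual))) ⊆
          pol (Bt I Csig) (Interp (A k)) := by
        have : pol (Bt I Csig) (pol (Bt I Csig) (Interp ((A k).dual))) ⊆
            pol (Bt I Csig) (pol (Bt I Csig) (pol (Bt I Csig) (Interp (A k)))) :=
          pol_anti (pol_anti (ih k))
        rwa [pol_tripol] at this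
      have hb' : b ∈ pol (Bt I Csig) (Interp (A k)) := hsub hb
      have := ha b hb'
      rwa [add_comm] at this
    calc Interp (Formula.dconn i (fun k => (A k).dual))
        = pol (Bt I Csig) (pol (Bt I Csig) (⋃ q ∈ (Csig i).dualRules, ∑ d ∈ q.parts,
            pol (Bt I Csig) (∑ k ∈ d, pol (Bt I Csig) (Interp ((A k).dual))))) := rfl
      _ ⊆ pol (Bt I Csig) (pol (Bt I Csig) (pol (Bt I Csig)
            (⋃ p ∈ (Csig i).rules, ∑ c ∈ p.parts,
              pol (Bt I Csig) (∑ k ∈ c, pol (Bt I Csig) (Interp (A k)))))) :=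
          pol_anti (pol_anti hDS)
      _ = _ := pol_tripol
  | dconn i A ih =>
    show Interp (Formula.conn i (fun k => (A k).dual)) ⊆ _
    have htgt : pol (Bt I Csig) (Interp (Formula.dconn i A)) =
        pol (Bt I Csig) (⋃ q ∈ (Csig i).dualRules, ∑ d ∈ q.parts,
          pol (Bt I Csig) (∑ k ∈ d, pol (Bt I Csig) (Interp (A k)))) := pol_tripol
    rw [htgt]
    have hCS : (⋃ p ∈ (Csig i).rules, ∑ c ∈ p.parts,
        pol (Bt I Csig) (∑ k ∈ c, pol (Bt I Csig) (Interp ((A k).dual)))) ⊆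
        pol (Bt I Csig) (⋃ q ∈ (Csig i).dualRules, ∑ d ∈ q.parts,
          pol (Bt I Csig) (∑ k ∈ d, pol (Bt I Csig) (Interp (A k)))) := by
      intro z hz
      rw [Set.mem_iUnion₂] at hz
      obtain ⟨p, hp, hz⟩ := hz
      intro w hw
      rw [Set.mem_iUnion₂] at hw
      obtain ⟨q, hq, hw⟩ := hw
      have hort : q.Orthogonal p := by
        have := (Csig i).orth'
        rw [← this] at hp
        exact hp q hq
      refine key_orth hort (fun k => pol (Bt I Csig) (Interp (A k)))
        (fun k => pol (Bt I Csig) (Interp ((A k).dual))) ?_ hw hz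
      intro k a ha b hb
      have hsub : pol (Bt I Csig) (pol (Bt I Csig) (Interp ((A k).dual))) ⊆
          pol (Bt I Csig) (Interp (A k)) := by
        have : pol (Bt I Csig) (pol (Bt I Csig) (Interp ((A k).dual))) ⊆
            pol (Bt I Csig) (pol (Bt I Csig) (pol (Bt I Csig) (Interp (A k)))) :=
          pol_anti (pol_anti (ih k))
        rwa [pol_tripol] at this
      have hb' : b ∈ pol (Bt I Csig) (Interp (A k)) := hsub hb
      have := ha b hb'
      rwa [add_comm] at this
    calc Interp (Formula.conn i (fun k => (A k).dual))
        = pol (Bt I Csig) (pol (Bt I Csig) (⋃ p ∈ (Csig i).rules, ∑ c ∈ p.parts,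
            pol (Bt I Csig) (∑ k ∈ c, pol (Bt I Csig) (Interp ((A k).dual))))) := rfl
      _ ⊆ pol (Bt I Csig) (pol (Bt I Csig) (pol (Bt I Csig)
            (⋃ q ∈ (Csig i).dualRules, ∑ d ∈ q.parts,
              pol (Bt I Csig) (∑ k ∈ d, pol (Bt I Csig) (Interp (A k)))))) :=
          pol_anti (pol_anti hCS)
      _ = _ := pol_tripol

end MLLSem

namespace MLLSem

variable {I : Type} {Csig : I → GenConn}

/-- The "tensor of the duals" of a sequent. -/
def SetSum (Γ : Multiset (Formula I Csig)) : Set (Multiset (Formula I Csig)) :=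
  (Γ.map (fun F => pol (Bt I Csig) (Interp F))).sum

lemma setSum_add (Γ Δ : Multiset (Formula I Csig)) :
    SetSum (Γ + Δ) = SetSum Γ + SetSum Δ := by
  rw [SetSum, SetSum, SetSum, Multiset.map_add, Multiset.sum_add]

lemma setSum_cons (F : Formula I Csig) (Γ : Multiset (Formula I Csig)) :
    SetSum (F ::ₘ Γ) = pol (Bt I Csig) (Interp F) + SetSum Γ := by
  rw [SetSum, SetSum, Multiset.map_cons, Multiset.sum_cons]

lemma setSum_finsum {α : Type*} [Fintype α] (Γ : α → Multiset (Formula I Csig)) :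
    SetSum (∑ c : α, Γ c) = ∑ c : α, SetSum (Γ c) := by
  classical
  induction (Finset.univ : Finset α) using Finset.cons_induction with
  | empty => rfl
  | cons a s ha ih => rw [Finset.sum_cons, Finset.sum_cons, setSum_add, ih]

/-- membership extraction from premises: context part lies in the double polar. -/
lemma mem_bipol_of_prem {A : Formula I Csig} {Γ : Multiset (Formula I Csig)}
    (hval : ∀ z ∈ SetSum (A ::ₘ Γ), z ∈ Bt I Csig)
    {x : Multiset (Formula I Csig)} (hx : x ∈ SetSum Γ) :
    x ∈ pol (Bt I Csig) (pol (Bt I Csig) (Interp A)) := by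
  intro y hy
  refine hval (y + x) ?_
  rw [setSum_cons]
  exact Set.add_mem_add hy hx

theorem sound {b : Bool} {Γ : Multiset (Formula I Csig)} (h : Provable b Γ) :
    ∀ z ∈ SetSum Γ, z ∈ Bt I Csig := by
  induction h with
  | ax m =>
    intro z hz
    rw [show ({Formula.pos m, Formula.neg m} : Multiset (Formula I Csig)) =
      Formula.pos m ::ₘ Formula.neg m ::ₘ 0 from rfl, setSum_cons, setSum_cons] at hz
    rcases Set.mem_add.1 hz with ⟨a, ha, z', hz', rfl⟩
    rcases Set.mem_add.1 hz' with ⟨c, hc, z0, hz0, rfl⟩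
    have hz00 : z0 = 0 := hz0
    have hab : a + c ∈ Bt I Csig := by
      have hc' : c ∈ pol (Bt I Csig) (pol (Bt I Csig) (Interp (Formula.pos m))) := hc
      have := mem_bipol hc' ha
      rwa [add_comm] at this
    rw [hz00, add_zero]
    exact hab
  | cut A Γ Δ hcut h1 h2 ih1 ih2 =>
    intro z hz
    rw [setSum_add] at hz
    rcases Set.mem_add.1 hz with ⟨x, hx, y, hy, rfl⟩
    have hxA : x ∈ pol (Bt I Csig) (pol (Bt I Csig) (Interp A)) := mem_bipol_of_prem ih1 hx
    have hyA : y ∈ pol (Bt I Csig) (pol (Bt I Csig) (Interp A.dual)) := mem_bipol_of_prem ih2 hy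
    have hyA' : y ∈ pol (Bt I Csig) (Interp A) := by
      have hsub : pol (Bt I Csig) (pol (Bt I Csig) (Interp A.dual)) ⊆
          pol (Bt I Csig) (Interp A) := by
        have := pol_anti (Bot := Bt I Csig) (pol_anti (Bot := Bt I Csig) (dual_sub A))
        rwa [pol_tripol] at this
      exact hsub hyA
    have := hxA y hyA'
    rwa [add_comm] at this
  | tens A B Γ Δ h1 h2 ih1 ih2 =>
    intro z hz
    rw [setSum_cons, setSum_add] at hz
    rcases Set.mem_add.1 hz with ⟨t, ht, z', hz', rfl⟩
    rcases Set.mem_add.1 hz' with ⟨x, hx, y, hy, rfl⟩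
    have hxA : x ∈ pol (Bt I Csig) (pol (Bt I Csig) (Interp A)) := mem_bipol_of_prem ih1 hx
    have hyB : y ∈ pol (Bt I Csig) (pol (Bt I Csig) (Interp B)) := mem_bipol_of_prem ih2 hy
    have hxy : x + y ∈ pol (Bt I Csig) (pol (Bt I Csig) (Interp A + Interp B)) :=
      add_mem_bipol hxA hyB
    have := ht (x + y) hxy
    rwa [add_comm] at this
  | parr A B Γ h ih =>
    intro z hz
    rw [setSum_cons] at hz
    rcases Set.mem_add.1 hz with ⟨t, ht, x, hx, rfl⟩
    have hx' : x ∈ pol (Bt I Csig) (pol (Bt I Csig) (Interp A) + pol (Bt I Csig) (Interp B)) := by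
      intro s hs
      rcases Set.mem_add.1 hs with ⟨a, ha, c, hc, rfl⟩
      have hmem : a + (c + x) ∈ SetSum (A ::ₘ B ::ₘ Γ) := by
        rw [setSum_cons, setSum_cons]
        exact Set.add_mem_add ha (Set.add_mem_add hc hx)
      have := ih _ hmem
      have heq : a + (c + x) = (a + c) + x := by abel
      rwa [heq] at this
    have := ht x hx'
    rwa [add_comm] at this
  | conn i A p hp Γf hprem ih =>
    intro z hz
    rw [setSum_cons] at hz
    rcases Set.mem_add.1 hz with ⟨t, ht, zs, hzs, rfl⟩
    rw [setSum_finsum] at hzs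
    obtain ⟨y, hy, rfl⟩ := mem_finsetSum hzs
    have hyc : ∀ c : {c // c ∈ p.parts},
        y c ∈ pol (Bt I Csig) (∑ k ∈ c.1, pol (Bt I Csig) (Interp (A k))) := by
      intro c u hu
      have hu' : u ∈ SetSum (Multiset.map A (c : Finset (Fin (Csig i).arity)).val) := by
        rw [SetSum, Multiset.map_map]
        rw [Finset.sum_eq_multiset_sum] at hu
        exact hu
      have hmem : y c + u ∈ SetSum (Γf c + Multiset.map A c.1.val) := by
        rw [setSum_add]
        exact Set.add_mem_add (hy c (Finset.mem_univ c)) hu'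
      have := ih c _ hmem
      rwa [add_comm] at this
    have hzs' : (∑ c : {c // c ∈ p.parts}, y c) ∈
        ⋃ p' ∈ (Csig i).rules, ∑ c ∈ p'.parts,
          pol (Bt I Csig) (∑ k ∈ c, pol (Bt I Csig) (Interp (A k))) := by
      rw [Set.mem_iUnion₂]
      refine ⟨p, hp, ?_⟩
      have heq : ∑ c ∈ p.parts, (fun c' => pol (Bt I Csig)
          (∑ k ∈ c', pol (Bt I Csig) (Interp (A k)))) c =
          ∑ c : {c // c ∈ p.parts}, pol (Bt I Csig)
            (∑ k ∈ c.1, pol (Bt I Csig) (Interp (A k))) :=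
        (Finset.sum_coe_sort p.parts _).symm
      rw [heq]
      exact sum_mem_finsetSum fun c _ => hyc c
    have := ht _ (subset_bipol hzs')
    rwa [add_comm] at this
  | dconn i A q hq Γf hprem ih =>
    intro z hz
    rw [setSum_cons] at hz
    rcases Set.mem_add.1 hz with ⟨t, ht, zs, hzs, rfl⟩
    rw [setSum_finsum] at hzs
    obtain ⟨y, hy, rfl⟩ := mem_finsetSum hzs
    have hyc : ∀ d : {d // d ∈ q.parts},
        y d ∈ pol (Bt I Csig) (∑ k ∈ d.1, pol (Bt I Csig) (Interp (A k))) := by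
      intro d u hu
      have hu' : u ∈ SetSum (Multiset.map A (d : Finset (Fin (Csig i).arity)).val) := by
        rw [SetSum, Multiset.map_map]
        rw [Finset.sum_eq_multiset_sum] at hu
        exact hu
      have hmem : y d + u ∈ SetSum (Γf d + Multiset.map A d.1.val) := by
        rw [setSum_add]
        exact Set.add_mem_add (hy d (Finset.mem_univ d)) hu'
      have := ih d _ hmem
      rwa [add_comm] at this
    have hzs' : (∑ d : {d // d ∈ q.parts}, y d) ∈
        ⋃ q' ∈ (Csig i).dualRules, ∑ d ∈ q'.parts,
          pol (Bt I Csig) (∑ k ∈ d, pol (Bt I Csig) (Interp (A k))) := by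
      rw [Set.mem_iUnion₂]
      refine ⟨q, hq, ?_⟩
      have heq : ∑ d ∈ q.parts, (fun d' => pol (Bt I Csig)
          (∑ k ∈ d', pol (Bt I Csig) (Interp (A k)))) d =
          ∑ d : {d // d ∈ q.parts}, pol (Bt I Csig)
            (∑ k ∈ d.1, pol (Bt I Csig) (Interp (A k))) :=
        (Finset.sum_coe_sort q.parts _).symm
      rw [heq]
      exact sum_mem_finsetSum fun d _ => hyc d
    have := ht _ (subset_bipol hzs')
    rwa [add_comm] at this

lemma mem_setSum_self (Γ : Multiset (Formula I Csig)) : Γ ∈ SetSum Γ := by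
  induction Γ using Multiset.induction with
  | empty => exact Set.mem_zero.2 rfl
  | cons F Γ ih =>
    rw [setSum_cons, ← Multiset.singleton_add]
    exact Set.add_mem_add (single_mem_pol F) ih

/-- Cut elimination for a provable sequent, semantically. -/
theorem cut_free {b : Bool} {Γ : Multiset (Formula I Csig)} (h : Provable b Γ) :
    Provable false Γ :=
  sound h Γ (mem_setSum_self Γ)

end MLLSem

/-! ## Syntactic analysis -/

section Analysis

variable {I : Type} {Csig : I → GenConn}

lemma provable_exists_not_pos {Γ : Multiset (Formula I Csig)} (h : Provable false Γ) :
    ∃ F ∈ Γ, ∀ m, F ≠ Formula.pos m := by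
  cases h with
  | ax m =>
    refine ⟨Formula.neg m, ?_, fun m' h => by cases h⟩
    exact Multiset.mem_cons_of_mem (Multiset.mem_singleton_self _)
  | cut A Γ Δ hcut h1 h2 => exact absurd hcut (by simp)
  | tens A B Γ Δ h1 h2 =>
    exact ⟨Formula.tens A B, Multiset.mem_cons_self _ _, fun m h => by cases h⟩
  | parr A B Γ h1 =>
    exact ⟨Formula.parr A B, Multiset.mem_cons_self _ _, fun m h => by cases h⟩
  | conn i A p hp Γf hprem =>
    exact ⟨Formula.conn i A, Multiset.mem_cons_self _ _, fun m h => by cases h⟩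
  | dconn i A q hq Γf hprem =>
    exact ⟨Formula.dconn i A, Multiset.mem_cons_self _ _, fun m h => by cases h⟩

lemma provable_exists_not_neg {Γ : Multiset (Formula I Csig)} (h : Provable false Γ) :
    ∃ F ∈ Γ, ∀ m, F ≠ Formula.neg m := by
  cases h with
  | ax m =>
    refine ⟨Formula.pos m, Multiset.mem_cons_self _ _, fun m' h => by cases h⟩
  | cut A Γ Δ hcut h1 h2 => exact absurd hcut (by simp)
  | tens A B Γ Δ h1 h2 =>
    exact ⟨Formula.tens A B, Multiset.mem_cons_self _ _, fun m h => by cases h⟩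
  | parr A B Γ h1 =>
    exact ⟨Formula.parr A B, Multiset.mem_cons_self _ _, fun m h => by cases h⟩
  | conn i A p hp Γf hprem =>
    exact ⟨Formula.conn i A, Multiset.mem_cons_self _ _, fun m h => by cases h⟩
  | dconn i A q hq Γf hprem =>
    exact ⟨Formula.dconn i A, Multiset.mem_cons_self _ _, fun m h => by cases h⟩

end Analysis

section PartsFacts

variable {n : ℕ}

lemma card_parts_of_all_singleton (p : Partition' n) (h : ∀ c ∈ p.parts, c.card = 1) :
    p.parts.card = n := by
  have h1 : ∑ c ∈ p.parts, c.card = n := by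
    rw [Finpartition.sum_card_parts]
    simp
  rw [Finset.sum_congr rfl h] at h1
  simpa using h1

lemma all_singleton_of_card_parts (p : Partition' n) (h : p.parts.card = n) :
    ∀ c ∈ p.parts, c.card = 1 := by
  have h1 : ∑ c ∈ p.parts, c.card = n := by
    rw [Finpartition.sum_card_parts]; simp
  by_contra hcon
  push_neg at hcon
  obtain ⟨c0, hc0, hne⟩ := hcon
  have hge : ∀ c ∈ p.parts, 1 ≤ c.card := fun c hc =>
    Finset.card_pos.2 (p.nonempty_of_mem_parts hc)
  have hlt : ∑ c ∈ p.parts, 1 < ∑ c ∈ p.parts, c.card :=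
    Finset.sum_lt_sum hge ⟨c0, hc0, by have := hge c0 hc0; omega⟩
  rw [h1] at hlt
  simp only [Finset.sum_const, smul_eq_mul, mul_one] at hlt
  omega

lemma parts_eq_of_card_one (p : Partition' n) (h : p.parts.card = 1) :
    p.parts = {Finset.univ} := by
  obtain ⟨t, ht⟩ := Finset.card_eq_one.1 h
  have hsup := p.sup_parts
  rw [ht, Finset.sup_singleton] at hsup
  rw [ht]
  simp only [id] at hsup
  rw [hsup]

lemma parts_val_sum (p : Partition' n) :
    ∑ c ∈ p.parts, c.val = (Finset.univ : Finset (Fin n)).val := by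
  refine Multiset.ext.2 fun x => ?_
  rw [Multiset.count_sum']
  have hxu : x ∈ (Finset.univ : Finset (Fin n)) := Finset.mem_univ x
  have hc2 : Multiset.count x (Finset.univ : Finset (Fin n)).val = 1 :=
    Multiset.count_eq_one_of_mem Finset.univ.nodup hxu
  rw [hc2]
  rw [Finset.sum_eq_single_of_mem (p.part x) (p.part_mem.2 hxu)]
  · exact Multiset.count_eq_one_of_mem (p.part x).nodup (p.mem_part hxu)
  · intro c hc hne
    refine Multiset.count_eq_zero_of_notMem ?_
    intro hx
    exact hne (p.part_eq_of_mem hc hx).symm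

/-- connectivity of the meeting graph when the right partition is `{univ}`. -/
lemma meetingGraph_connected_right (p q : Partition' n) (hq : q.parts = {Finset.univ}) :
    (meetingGraph p q).Connected := by
  have hu : (Finset.univ : Finset (Fin n)) ∈ q.parts := by
    rw [hq]; exact Finset.mem_singleton_self _
  let u : {d // d ∈ q.parts} := ⟨Finset.univ, hu⟩
  have hreach : ∀ v, (meetingGraph p q).Reachable v (Sum.inr u) := by
    rintro (c | d)
    · refine SimpleGraph.Adj.reachable ?_
      rw [meetingGraph, SimpleGraph.fromRel_adj]
      refine ⟨by simp, Or.inl ⟨c, u, ?_, rfl, rfl⟩⟩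
      rw [Finset.inter_univ]
      exact p.nonempty_of_mem_parts c.2
    · obtain ⟨dv, hdv⟩ := d
      have h3 : dv = Finset.univ := Finset.mem_singleton.1 (hq ▸ hdv)
      have hd : (⟨dv, hdv⟩ : {d // d ∈ q.parts}) = u := Subtype.ext h3
      rw [hd]
  haveI : Nonempty ({c // c ∈ p.parts} ⊕ {d // d ∈ q.parts}) := ⟨Sum.inr u⟩
  exact ⟨fun v w => (hreach v).trans (hreach w).symm⟩

/-- connectivity of the meeting graph when the left partition is `{univ}`. -/
lemma meetingGraph_connected_left (p q : Partition' n) (hp : p.parts = {Finset.univ}) :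
    (meetingGraph p q).Connected := by
  have hu : (Finset.univ : Finset (Fin n)) ∈ p.parts := by
    rw [hp]; exact Finset.mem_singleton_self _
  let u : {c // c ∈ p.parts} := ⟨Finset.univ, hu⟩
  have hreach : ∀ v, (meetingGraph p q).Reachable v (Sum.inl u) := by
    rintro (c | d)
    · obtain ⟨cv, hcv⟩ := c
      have h3 : cv = Finset.univ := Finset.mem_singleton.1 (hp ▸ hcv)
      have hc : (⟨cv, hcv⟩ : {c // c ∈ p.parts}) = u := Subtype.ext h3
      rw [hc]
    · refine SimpleGraph.Adj.reachable ?_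
      rw [meetingGraph, SimpleGraph.fromRel_adj]
      refine ⟨by simp, Or.inr ⟨u, d, ?_, rfl, rfl⟩⟩
      rw [Finset.univ_inter]
      exact q.nonempty_of_mem_parts d.2
  haveI : Nonempty ({c // c ∈ p.parts} ⊕ {d // d ∈ q.parts}) := ⟨Sum.inl u⟩
  exact ⟨fun v w => (hreach v).trans (hreach w).symm⟩

end PartsFacts

/-! ## Main theorems -/

section Main

variable (g : GenConn)

lemma map_finsetSum_val {α β γ : Type*} [DecidableEq α] (s : Finset γ) (f : α → β)
    (F : γ → Multiset α) :
    ∑ d ∈ s, Multiset.map f (F d) = Multiset.map f (∑ d ∈ s, F d) :=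
  (map_sum (Multiset.mapAddMonoidHom f) F s).symm

lemma isPar_of_mem_card_one (p : Partition' g.arity) (hp : p ∈ g.rules)
    (h1 : p.parts.card = 1) : IsParSet g.rules := by
  have hppart : p.parts = {Finset.univ} := parts_eq_of_card_one _ h1
  unfold IsParSet
  ext r
  constructor
  · intro hr
    obtain ⟨q0, hq0⟩ := g.dualRules_nonempty
    have hq0' : q0 ∈ orthCompl g.rules := by rw [g.orth]; exact hq0
    have h2 := (hq0' r hr).2
    have h3 := (hq0' p hp).2
    rw [h1] at h3
    show r.parts = {Finset.univ}
    exact parts_eq_of_card_one _ (by omega)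
  · intro hr
    show r ∈ g.rules
    rw [← g.orth']
    intro q hq
    have hq' : q ∈ orthCompl g.rules := by rw [g.orth]; exact hq
    have h3 := (hq' p hp).2
    rw [h1] at h3
    constructor
    · exact meetingGraph_connected_right q r hr
    · have hr1 : r.parts.card = 1 := by rw [show r.parts = {Finset.univ} from hr]; simp
      omega
 
lemma isTensor_of_mem_card_one (q : Partition' g.arity) (hq : q ∈ g.dualRules)
    (h1 : q.parts.card = 1) : IsTensorSet g.rules := by
  have hq' : q ∈ orthCompl g.rules := by rw [g.orth]; exact hq
  unfold IsTensorSet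
  ext r
  constructor
  · intro hr
    have h2 := (hq' r hr).2
    rw [h1] at h2
    exact all_singleton_of_card_parts r (by omega)
  · intro hr
    have hrcard : r.parts.card = g.arity := card_parts_of_all_singleton r hr
    show r ∈ g.rules
    rw [← g.orth']
    intro q' hq'mem
    have hq'' : q' ∈ orthCompl g.rules := by rw [g.orth]; exact hq'mem
    obtain ⟨p0, hp0⟩ := g.rules_nonempty
    have h3 := (hq'' p0 hp0).2
    have h4 := (hq' p0 hp0).2
    rw [h1] at h4
    have hq'card : q'.parts.card = 1 := by omega
    have hq'parts : q'.parts = {Finset.univ} := parts_eq_of_card_one _ hq'card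
    constructor
    · exact meetingGraph_connected_left q' r hq'parts
    · omega

theorem forward_analysis (a : Fin g.arity → ℕ)
    (h : Provable (I := Unit) (Csig := fun _ => g) false
      {Formula.conn () (fun k => Formula.pos (a k)),
       Formula.dconn () (fun k => Formula.neg (a k))}) :
    IsTensorSet g.rules ∨ IsParSet g.rules := by
  classical
  set A : Fin g.arity → Formula Unit (fun _ => g) := fun k => Formula.pos (a k) with hA
  set B : Fin g.arity → Formula Unit (fun _ => g) := fun k => Formula.neg (a k) with hB
  set cF : Formula Unit (fun _ => g) := Formula.conn () A with hcF
  set dF : Formula Unit (fun _ => g) := Formula.dconn () B with hdF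
  obtain ⟨S, hS⟩ : ∃ S : Multiset (Formula Unit (fun _ => g)), S = {cF, dF} := ⟨_, rfl⟩
  rw [← hS] at h
  cases h with
  | ax m =>
    exfalso
    have hmem : cF ∈ ({Formula.pos m, Formula.neg m} : Multiset (Formula Unit (fun _ => g))) := by
      rw [hS]; exact Multiset.mem_cons_self _ _
    rcases Multiset.mem_cons.1 hmem with h1 | h1
    · simp [hcF] at h1
    · simp [hcF] at h1
  | cut A' Γ Δ hcut h1 h2 => exact absurd hcut (by simp)
  | tens A' B' Γ Δ h1 h2 =>
    exfalso
    have hmem : Formula.tens A' B' ∈ ({cF, dF} : Multiset (Formula Unit (fun _ => g))) := by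
      rw [← hS]; exact Multiset.mem_cons_self _ _
    rcases Multiset.mem_cons.1 hmem with h1' | h1'
    · simp [hcF] at h1'
    · simp [hdF] at h1'
  | parr A' B' Γ h1 =>
    exfalso
    have hmem : Formula.parr A' B' ∈ ({cF, dF} : Multiset (Formula Unit (fun _ => g))) := by
      rw [← hS]; exact Multiset.mem_cons_self _ _
    rcases Multiset.mem_cons.1 hmem with h1' | h1'
    · simp [hcF] at h1'
    · simp [hdF] at h1'
  | conn i A' p hp Γf hprem =>
    have hmem : Formula.conn i A' ∈ ({cF, dF} : Multiset (Formula Unit (fun _ => g))) := by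
      rw [← hS]; exact Multiset.mem_cons_self _ _
    rcases Multiset.mem_cons.1 hmem with h1' | h1'
    · -- principal conn
      have hiA : A' = A := by
        rw [hcF] at h1'
        injection h1' with hfun
        all_goals exact hfun
      rcases Multiset.cons_eq_cons.1 hS with ⟨-, hrest⟩ | ⟨hne, cs, hc1, hc2⟩
      · by_cases hm : p.parts.card = 1
        · exact Or.inr (isPar_of_mem_card_one g p hp hm)
        · exfalso
          have hcard1 : ∑ c : {c // c ∈ p.parts}, Multiset.card (Γf c) = 1 := by
            have hcc := congrArg Multiset.card hrest
            rw [Multiset.card_sum Finset.univ Γf] at hcc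
            simpa using hcc
          have hex : ∃ c0 : {c // c ∈ p.parts}, Multiset.card (Γf c0) ≠ 0 := by
            by_contra hall
            push_neg at hall
            rw [Finset.sum_eq_zero (fun c _ => hall c)] at hcard1
            omega
          obtain ⟨c0, hc0⟩ := hex
          have hge2 : 1 < Fintype.card {c // c ∈ p.parts} := by
            rw [Fintype.card_coe]
            have : 0 < p.parts.card := Finset.card_pos.2 ⟨c0.1, c0.2⟩
            omega
          obtain ⟨c1, hc1ne⟩ := Fintype.exists_ne_of_one_lt_card hge2 c0
          have hsumpair : Multiset.card (Γf c1) + Multiset.card (Γf c0) ≤ 1 := by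
            have hsub : ({c1, c0} : Finset {c // c ∈ p.parts}) ⊆ Finset.univ :=
              Finset.subset_univ _
            have := Finset.sum_le_sum_of_subset (f := fun c => Multiset.card (Γf c)) hsub
            rw [Finset.sum_pair hc1ne, hcard1] at this
            exact this
          have hΓ0 : Γf c1 = 0 := Multiset.card_eq_zero.1 (by omega)
          have hprem1 := hprem c1
          rw [hΓ0, zero_add] at hprem1
          obtain ⟨F, hF, hnp⟩ := provable_exists_not_pos hprem1
          obtain ⟨k, -, rfl⟩ := Multiset.mem_map.1 hF
          exact hnp (a k) (by rw [hiA])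
      · exfalso
        have : Formula.conn i A' ∈ ({dF} : Multiset (Formula Unit (fun _ => g))) := by
          rw [hc2]; exact Multiset.mem_cons_self _ _
        rw [hdF] at this
        cases Multiset.mem_singleton.1 this
    · exfalso
      rw [hdF] at h1'
      cases Multiset.mem_singleton.1 h1'
  | dconn i B' q hq Γf hprem =>
    have hmem : Formula.dconn i B' ∈ ({cF, dF} : Multiset (Formula Unit (fun _ => g))) := by
      rw [← hS]; exact Multiset.mem_cons_self _ _
    rcases Multiset.mem_cons.1 hmem with h1' | h1'
    · exfalso
      rw [hcF] at h1'
      cases h1'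
    · -- principal dconn
      have h1'' := Multiset.mem_singleton.1 h1'
      have hiB : B' = B := by
        rw [hdF] at h1''
        injection h1'' with hfun
        all_goals exact hfun
      -- S = {cF, dF} = {dF, cF}
      have hS' : Formula.dconn i B' ::ₘ (∑ c : {c // c ∈ q.parts}, Γf c) = dF ::ₘ {cF} := by
        rw [hS]
        rw [show ({cF, dF} : Multiset (Formula Unit (fun _ => g))) = cF ::ₘ dF ::ₘ 0 from rfl]
        rw [Multiset.cons_swap]
        rfl
      rcases Multiset.cons_eq_cons.1 hS' with ⟨-, hrest⟩ | ⟨hne, cs, hc1, hc2⟩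
      · by_cases hm : q.parts.card = 1
        · exact Or.inl (isTensor_of_mem_card_one g q hq hm)
        · exfalso
          have hcard1 : ∑ c : {c // c ∈ q.parts}, Multiset.card (Γf c) = 1 := by
            have hcc := congrArg Multiset.card hrest
            rw [Multiset.card_sum Finset.univ Γf] at hcc
            simpa using hcc
          have hex : ∃ c0 : {c // c ∈ q.parts}, Multiset.card (Γf c0) ≠ 0 := by
            by_contra hall
            push_neg at hall
            rw [Finset.sum_eq_zero (fun c _ => hall c)] at hcard1
            omega
          obtain ⟨c0, hc0⟩ := hex
          have hge2 : 1 < Fintype.card {c // c ∈ q.parts} := by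
            rw [Fintype.card_coe]
            have : 0 < q.parts.card := Finset.card_pos.2 ⟨c0.1, c0.2⟩
            omega
          obtain ⟨c1, hc1ne⟩ := Fintype.exists_ne_of_one_lt_card hge2 c0
          have hsumpair : Multiset.card (Γf c1) + Multiset.card (Γf c0) ≤ 1 := by
            have hsub : ({c1, c0} : Finset {c // c ∈ q.parts}) ⊆ Finset.univ :=
              Finset.subset_univ _
            have := Finset.sum_le_sum_of_subset (f := fun c => Multiset.card (Γf c)) hsub
            rw [Finset.sum_pair hc1ne, hcard1] at this
            exact this
          have hΓ0 : Γf c1 = 0 := Multiset.card_eq_zero.1 (by omega)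
          have hprem1 := hprem c1
          rw [hΓ0, zero_add] at hprem1
          obtain ⟨F, hF, hnn⟩ := provable_exists_not_neg hprem1
          obtain ⟨k, -, rfl⟩ := Multiset.mem_map.1 hF
          exact hnn (a k) (by rw [hiB])
      · exfalso
        have : Formula.dconn i B' ∈ ({cF} : Multiset (Formula Unit (fun _ => g))) := by
          rw [hc2]; exact Multiset.mem_cons_self _ _
        rw [hcF] at this
        cases Multiset.mem_singleton.1 this

end Main

section Backward

variable (g : GenConn)

theorem backward_par (a : Fin g.arity → ℕ) (hps : IsParSet g.rules) :
    Provable (I := Unit) (Csig := fun _ => g) true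
      {Formula.conn () (fun k => Formula.pos (a k)),
       Formula.dconn () (fun k => Formula.neg (a k))} := by
  classical
  set A : Fin g.arity → Formula Unit (fun _ => g) := fun k => Formula.pos (a k) with hA
  set B : Fin g.arity → Formula Unit (fun _ => g) := fun k => Formula.neg (a k) with hB
  obtain ⟨p0, hp0⟩ := g.rules_nonempty
  have hp0parts : p0.parts = {Finset.univ} := by rw [hps] at hp0; exact hp0
  obtain ⟨q0, hq0⟩ := g.dualRules_nonempty
  have horth : p0.Orthogonal q0 := by
    have : q0 ∈ orthCompl g.rules := by rw [g.orth]; exact hq0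
    exact this p0 hp0
  have hp0card : p0.parts.card = 1 := by rw [hp0parts]; simp
  have hq0card : q0.parts.card = g.arity := by
    have := horth.2; omega
  have hq0sing := all_singleton_of_card_parts q0 hq0card
  -- inner proof : ⊢ dconn B, A 1, ..., A n
  have hinner : Provable (I := Unit) (Csig := fun _ => g) true
      (Formula.dconn () B ::ₘ Multiset.map A (Finset.univ : Finset (Fin g.arity)).val) := by
    have hrule := Provable.dconn (cutEnabled := true) () B q0 hq0
      (fun d => Multiset.map A (d : Finset (Fin g.arity)).val) ?_
    · have hsum : (∑ d : {d // d ∈ q0.parts}, Multiset.map A (d : Finset (Fin g.arity)).val) =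
          Multiset.map A (Finset.univ : Finset (Fin g.arity)).val := by
        rw [Finset.sum_coe_sort q0.parts (fun d => Multiset.map A d.val)]
        rw [map_finsetSum_val q0.parts A (fun d => d.val), parts_val_sum q0]
      rwa [hsum] at hrule
    · intro d
      obtain ⟨k, hk⟩ := Finset.card_eq_one.1 (hq0sing d.1 d.2)
      have hval : (d : Finset (Fin g.arity)).val = {k} := by rw [hk]; rfl
      show Provable true (Multiset.map A (d : Finset (Fin g.arity)).val +
        Multiset.map B (d : Finset (Fin g.arity)).val)
      rw [hval, Multiset.map_singleton, Multiset.map_singleton]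
      show Provable true ({Formula.pos (a k)} + {Formula.neg (a k)})
      rw [Multiset.singleton_add]
      exact Provable.ax (a k)
  -- outer rule
  have hout := Provable.conn (cutEnabled := true) () A p0 hp0
    (fun _ => ({Formula.dconn () B} : Multiset (Formula Unit (fun _ => g)))) ?_
  · have hsum : (∑ _c : {c // c ∈ p0.parts},
        ({Formula.dconn () B} : Multiset (Formula Unit (fun _ => g)))) =
        {Formula.dconn () B} := by
      rw [Finset.sum_const, Finset.card_univ, Fintype.card_coe, hp0card, one_smul]
    rw [hsum] at hout
    exact hout
  · rintro ⟨cv, hcv⟩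
    have hd : cv = Finset.univ := Finset.mem_singleton.1 (hp0parts ▸ hcv)
    show Provable true ({Formula.dconn () B} + Multiset.map A cv.val)
    rw [hd, Multiset.singleton_add]
    exact hinner

theorem backward_tensor (a : Fin g.arity → ℕ) (hts : IsTensorSet g.rules) :
    Provable (I := Unit) (Csig := fun _ => g) true
      {Formula.conn () (fun k => Formula.pos (a k)),
       Formula.dconn () (fun k => Formula.neg (a k))} := by
  classical
  set A : Fin g.arity → Formula Unit (fun _ => g) := fun k => Formula.pos (a k) with hA
  set B : Fin g.arity → Formula Unit (fun _ => g) := fun k => Formula.neg (a k) with hB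
  obtain ⟨p0, hp0⟩ := g.rules_nonempty
  have hp0sing : ∀ c ∈ p0.parts, c.card = 1 := by rw [hts] at hp0; exact hp0
  have hp0card : p0.parts.card = g.arity := card_parts_of_all_singleton p0 hp0sing
  obtain ⟨q0, hq0⟩ := g.dualRules_nonempty
  have horth : p0.Orthogonal q0 := by
    have : q0 ∈ orthCompl g.rules := by rw [g.orth]; exact hq0
    exact this p0 hp0
  have hq0card : q0.parts.card = 1 := by have := horth.2; omega
  have hq0parts : q0.parts = {Finset.univ} := parts_eq_of_card_one _ hq0card
  -- inner proof : ⊢ conn A, B 1, ..., B n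
  have hinner : Provable (I := Unit) (Csig := fun _ => g) true
      (Formula.conn () A ::ₘ Multiset.map B (Finset.univ : Finset (Fin g.arity)).val) := by
    have hrule := Provable.conn (cutEnabled := true) () A p0 hp0
      (fun c => Multiset.map B (c : Finset (Fin g.arity)).val) ?_
    · have hsum : (∑ c : {c // c ∈ p0.parts}, Multiset.map B (c : Finset (Fin g.arity)).val) =
          Multiset.map B (Finset.univ : Finset (Fin g.arity)).val := by
        rw [Finset.sum_coe_sort p0.parts (fun c => Multiset.map B c.val)]
        rw [map_finsetSum_val p0.parts B (fun c => c.val), parts_val_sum p0]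
      rwa [hsum] at hrule
    · intro c
      obtain ⟨k, hk⟩ := Finset.card_eq_one.1 (hp0sing c.1 c.2)
      have hval : (c : Finset (Fin g.arity)).val = {k} := by rw [hk]; rfl
      show Provable true (Multiset.map B (c : Finset (Fin g.arity)).val +
        Multiset.map A (c : Finset (Fin g.arity)).val)
      rw [hval, Multiset.map_singleton, Multiset.map_singleton]
      show Provable true ({Formula.neg (a k)} + {Formula.pos (a k)})
      rw [Multiset.singleton_add]
      have hax := Provable.ax (I := Unit) (Csig := fun _ => g) (cutEnabled := true) (a k)
      have : ({Formula.pos (a k), Formula.neg (a k)} : Multiset (Formula Unit (fun _ => g))) =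
          Formula.neg (a k) ::ₘ {Formula.pos (a k)} := by
        rw [show ({Formula.pos (a k), Formula.neg (a k)} :
          Multiset (Formula Unit (fun _ => g))) =
          Formula.pos (a k) ::ₘ Formula.neg (a k) ::ₘ 0 from rfl, Multiset.cons_swap]
        rfl
      rwa [this] at hax
  -- outer rule
  have hout := Provable.dconn (cutEnabled := true) () B q0 hq0
    (fun _ => ({Formula.conn () A} : Multiset (Formula Unit (fun _ => g)))) ?_
  · have hsum : (∑ _d : {d // d ∈ q0.parts},
        ({Formula.conn () A} : Multiset (Formula Unit (fun _ => g)))) =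
        {Formula.conn () A} := by
      rw [Finset.sum_const, Finset.card_univ, Fintype.card_coe, hq0card, one_smul]
    rw [hsum] at hout
    have hswap : Formula.dconn () B ::ₘ ({Formula.conn () A} :
        Multiset (Formula Unit (fun _ => g))) =
        {Formula.conn () A, Formula.dconn () B} := by
      have hcs := Multiset.cons_swap (Formula.dconn () B) (Formula.conn () A)
        (0 : Multiset (Formula Unit (fun _ => g)))
      simpa using hcs
    rwa [hswap] at hout
  · rintro ⟨dv, hdv⟩
    have hd : dv = Finset.univ := Finset.mem_singleton.1 (hq0parts ▸ hdv)
    show Provable true ({Formula.conn () A} + Multiset.map B dv.val)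
    rw [hd, Multiset.singleton_add]
    exact hinner

end Backward


/-- **Provability of the "excluded middle" sequent characterizes `⊗ⁿ`/`⅋ⁿ`:**
for any dual pair `(C, C*)` of `n`-ary generalized connectives and (distinct) atoms
`A₁,…,Aₙ`, the sequent `⊢ C(A₁,…,Aₙ), C*(~A₁,…,~Aₙ)` is provable in `MLL(C, C*)` if and
only if `C = ⊗ⁿ` (i.e. `P_C` is the partition set consisting of the partition of
`{1,…,n}` into singletons) or `C = ⅋ⁿ` (i.e. `P_C` is the partition set consisting of the
one-class partition). -/
theorem excluded_middle_provable_iff_tensor_or_par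
    (g : GenConn) (a : Fin g.arity → ℕ) (ha : Function.Injective a) :
    Provable (I := Unit) (Csig := fun _ => g) true
      {Formula.conn () (fun k => Formula.pos (a k)),
       Formula.dconn () (fun k => Formula.neg (a k))} ↔
    (IsTensorSet g.rules ∨ IsParSet g.rules) := by
  constructor
  · intro h
    exact forward_analysis g a (MLLSem.cut_free h)
  · rintro (hts | hps)
    · exact backward_tensor g a hts
    · exact backward_par g a hps
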